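/- The linear elements of Aut(V, θ^A) are exactly the elements of the centralizer Sp(V, Ω)^A: if g: V → V is a linear bijection satisfying Ω(g(z) − A(g(z)), g(v)) = Ω(z − Az, v) for all z, v ∈ V, then g ∈ Sp(V, Ω) and gA = Ag. -/
import Mathlib


/-- The linear elements of `Aut(V, θ^A)` are exactly the elements of the
centralizer `Sp(V, Ω)^A`: if `g : V → V` is a linear bijection satisfying
`Ω(g(z) − A(g(z)), g(v)) = Ω(z − Az, v)` for all `z, v ∈ V`, then `g ∈ Sp(V, Ω)`
and `gA = Ag`. -/
theorem stmt_5 {V : Type*} [AddCommGroup V] [Module ℝ V] [FiniteDimensional ℝ V]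
    (Ω : V →ₗ[ℝ] V →ₗ[ℝ] ℝ)
    (hΩalt : ∀ x : V, Ω x x = 0)
    (hΩnd : ∀ x : V, (∀ y : V, Ω x y = 0) → x = 0)
    (A : V →ₗ[ℝ] V) (hA : ∀ x y : V, Ω (A x) y + Ω x (A y) = 0)
    (g : V →ₗ[ℝ] V) (hbij : Function.Bijective g)
    (hpres : ∀ z v : V, Ω (g z - A (g z)) (g v) = Ω (z - A z) v) :
    (∀ a b : V, Ω (g a) (g b) = Ω a b) ∧ ∀ z : V, g (A z) = A (g z) := by
  have skew : ∀ x y : V, Ω x y = -Ω y x := by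
    intro x y
    have h := hΩalt (x + y)
    simp [map_add, hΩalt] at h
    linarith
  have key : ∀ z v : V, Ω (g z) (g v) - Ω z v = Ω (A (g z)) (g v) - Ω (A z) v := by
    intro z v
    have := hpres z v
    simp only [map_sub, LinearMap.sub_apply] at this
    linarith
  have sym : ∀ z v : V, Ω (A (g z)) (g v) - Ω (A z) v = Ω (A (g v)) (g z) - Ω (A v) z := by
    intro z v
    have h1 := hA (g z) (g v)
    have h2 := hA z v
    have h3 := skew (g z) (A (g v))
    have h4 := skew z (A v)
    linarith
  have hsymp : ∀ a b : V, Ω (g a) (g b) = Ω a b := by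
    intro a b
    have k1 := key a b
    have k2 := key b a
    have s := sym a b
    have s1 := skew (g a) (g b)
    have s2 := skew a b
    linarith
  refine ⟨hsymp, fun z => ?_⟩
  have hzero : ∀ v : V, Ω (g (A z) - A (g z)) (g v) = 0 := by
    intro v
    have k := key z v
    have hs := hsymp z v
    have hs2 := hsymp (A z) v
    simp only [map_sub, LinearMap.sub_apply]
    linarith
  have : g (A z) - A (g z) = 0 := by
    apply hΩnd
    intro y
    obtain ⟨v, rfl⟩ := hbij.2 y
    exact hzero v
  have := sub_eq_zero.mp this
  exact this
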